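/- Let m ∈ ℕ and let s : ℕ → ℝ be a real sequence. The following two conditions are equivalent: (i) for every choice of real coefficients g_0, …, g_m such that the function x ↦ ∑_{k=0}^{m} g_k 𝓛_k(x) is nonnegative at every x ≥ 0, one has ∑_{k=0}^{m} s_k g_k ≥ 0; (ii) the (m+1)×(m+1) real symmetric matrix A_s, with entries (A_s)_{ij} = ∑_{k=0}^{l} s_k · C(l,k) · l! when i+j = 2l is even and (A_s)_{ij} = 0 when i+j is odd (0 ≤ i,j ≤ m), is positive semidefinite. -/

import Mathlib

/-- The `k`-th Laguerre polynomial: `L_k(x) = ∑_{l=0}^k ((-1)^l / l!) C(k,l) x^l`. -/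
noncomputable def laguerreL (k : ℕ) (x : ℝ) : ℝ :=
  ∑ l ∈ Finset.range (k + 1), ((-1 : ℝ) ^ l / (l.factorial : ℝ)) * (k.choose l : ℝ) * x ^ l

/-- The `k`-th Laguerre function: `𝓛_k(x) = (-1)^k L_k(x) e^{-x/2}`. -/
noncomputable def laguerreFun (k : ℕ) (x : ℝ) : ℝ :=
  (-1 : ℝ) ^ k * laguerreL k x * Real.exp (-x / 2)

section auxlemmas
open Polynomial Finset

private lemma alt_sum_real (n : ℕ) :
    ∑ i ∈ range (n + 1), (-1:ℝ) ^ i * (n.choose i : ℝ) = if n = 0 then 1 else 0 := by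
  have h := @Int.alternating_sum_range_choose n
  have h3 : ((if n = 0 then 1 else 0 : ℤ) : ℝ) = (if n = 0 then 1 else 0 : ℝ) := by
    split <;> norm_num
  rw [← h3, ← h]
  push_cast
  rfl

private lemma orth (N k j : ℕ) (hk : k < N) :
    ∑ l ∈ range N, (-1:ℝ) ^ l * (k.choose l : ℝ) * (l.choose j : ℝ)
      = (-1:ℝ) ^ k * (if j = k then 1 else 0) := by
  have hsub : ∑ l ∈ range N, (-1:ℝ) ^ l * (k.choose l : ℝ) * (l.choose j : ℝ)
      = ∑ l ∈ range (k+1), (-1:ℝ) ^ l * (k.choose l : ℝ) * (l.choose j : ℝ) := by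
    refine (Finset.sum_subset (Finset.range_subset_range.mpr hk) ?_).symm
    intro l _ hl
    rw [Finset.mem_range, not_lt] at hl
    rw [Nat.choose_eq_zero_of_lt hl]
    simp
  rw [hsub]
  by_cases hjk : k < j
  · rw [if_neg (by omega)]
    rw [Finset.sum_eq_zero, mul_zero]
    intro l hl
    rw [Finset.mem_range] at hl
    rw [Nat.choose_eq_zero_of_lt (show l < j by omega)]
    simp
  · push_neg at hjk
    -- restrict to l ≥ j and reindex
    have hsplit : ∑ l ∈ range (k+1), (-1:ℝ) ^ l * (k.choose l : ℝ) * (l.choose j : ℝ)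
        = ∑ l ∈ Finset.Ico j (k+1), (-1:ℝ) ^ l * (k.choose l : ℝ) * (l.choose j : ℝ) := by
      rw [Finset.range_eq_Ico, ← Finset.sum_Ico_consecutive _ (Nat.zero_le j) (by omega)]
      rw [Finset.sum_eq_zero, zero_add]
      intro l hl
      rw [Finset.mem_Ico] at hl
      rw [Nat.choose_eq_zero_of_lt (show l < j by omega)]
      simp
    rw [hsplit, Finset.sum_Ico_eq_sum_range]
    have hterm : ∀ i ∈ range (k + 1 - j), (-1:ℝ) ^ (j+i) * (k.choose (j+i) : ℝ) * ((j+i).choose j : ℝ)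
        = ((-1:ℝ)^j * (k.choose j : ℝ)) * ((-1:ℝ)^i * ((k-j).choose i : ℝ)) := by
      intro i hi
      rw [Finset.mem_range] at hi
      have hik : j + i ≤ k := by omega
      have hcm := Nat.choose_mul (n := k) (Nat.le_add_right j i)
      have : (k.choose (j+i) : ℝ) * ((j+i).choose j : ℝ) = (k.choose j : ℝ) * ((k-j).choose (j+i-j) : ℝ) := by
        exact_mod_cast congrArg (Nat.cast : ℕ → ℝ) hcm
    
      rw [pow_add]
      rw [show j + i - j = i by omega] at this
      linear_combination ((-1:ℝ)^j * (-1)^i) * this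
    rw [Finset.sum_congr rfl hterm, ← Finset.mul_sum]
    rw [show k + 1 - j = (k - j) + 1 by omega]
    rw [alt_sum_real]
    by_cases hjk2 : j = k
    · subst hjk2; simp
    · rw [if_neg (by omega), if_neg hjk2]
      simp

private noncomputable def lamF (t : ℕ → ℝ) (M : ℕ) (F : Polynomial ℝ) : ℝ :=
  ∑ n ∈ range M, F.coeff n * t n

private lemma lamF_add (t : ℕ → ℝ) (M : ℕ) (F G : Polynomial ℝ) :
    lamF t M (F + G) = lamF t M F + lamF t M G := by
  simp [lamF, add_mul, Finset.sum_add_distrib]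

private lemma lamF_sum {α : Type*} (t : ℕ → ℝ) (M : ℕ) (u : Finset α) (F : α → Polynomial ℝ) :
    lamF t M (∑ i ∈ u, F i) = ∑ i ∈ u, lamF t M (F i) := by
  simp only [lamF, Polynomial.finset_sum_coeff, Finset.sum_mul]
  exact Finset.sum_comm

private lemma lamF_monomial (t : ℕ → ℝ) (M k : ℕ) (a : ℝ) (hk : k < M) :
    lamF t M (Polynomial.monomial k a) = a * t k := by
  simp only [lamF, Polynomial.coeff_monomial]
  rw [Finset.sum_eq_single k]
  · simp
  · intro n _ hn; rw [if_neg (Ne.symm hn)]; simp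
  · intro hn; exact absurd (Finset.mem_range.mpr hk) hn

private lemma lam_sq (t : ℕ → ℝ) (m : ℕ) (D : Polynomial ℝ) (hD : D.natDegree ≤ m) :
    lamF t (2*m+1) (D^2)
      = ∑ i ∈ range (m+1), ∑ j ∈ range (m+1), D.coeff i * D.coeff j * t (i+j) := by
  have hlt : D.natDegree < m + 1 := lt_of_le_of_lt hD (lt_add_one m)
  have hrw : D ^ 2 = ∑ i ∈ range (m+1), ∑ j ∈ range (m+1),
      Polynomial.monomial (i + j) (D.coeff i * D.coeff j) := by
    conv_lhs => rw [sq, D.as_sum_range' (m+1) hlt]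
    rw [Finset.sum_mul_sum]
    simp [Polynomial.monomial_mul_monomial]
  rw [hrw, lamF_sum]
  refine Finset.sum_congr rfl fun i hi => ?_
  rw [lamF_sum]
  refine Finset.sum_congr rfl fun j hj => ?_
  rw [Finset.mem_range] at hi hj
  rw [lamF_monomial _ _ _ _ (by omega)]

private lemma sos_of_nonneg : ∀ (n : ℕ) (q : Polynomial ℝ), q.natDegree ≤ 2*n →
    (∀ x : ℝ, 0 ≤ q.eval x) →
    ∃ a b : Polynomial ℝ, q = a^2 + b^2 ∧ a.natDegree ≤ n ∧ b.natDegree ≤ n := by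
  intro n
  induction n with
  | zero =>
    intro q hdeg hpos
    rw [Nat.le_zero] at hdeg
    obtain ⟨c, hc⟩ : ∃ c, q = Polynomial.C c := ⟨q.coeff 0, q.eq_C_of_natDegree_eq_zero (by omega)⟩
    have hc0 : 0 ≤ c := by have := hpos 0; rwa [hc, Polynomial.eval_C] at this
    refine ⟨Polynomial.C (Real.sqrt c), 0, ?_, by simp, by simp⟩
    rw [hc, ← map_pow, Real.sq_sqrt hc0]
    ring
  | succ n ih =>
    intro q hdeg hpos
    by_cases hq0 : q = 0
    · exact ⟨0, 0, by simp [hq0], by simp, by simp⟩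
    by_cases hd0 : q.natDegree = 0
    · obtain ⟨c, hc⟩ : ∃ c, q = Polynomial.C c := ⟨q.coeff 0, q.eq_C_of_natDegree_eq_zero hd0⟩
      have hc0 : 0 ≤ c := by have := hpos 0; rwa [hc, Polynomial.eval_C] at this
      refine ⟨Polynomial.C (Real.sqrt c), 0, ?_, by simp, by simp⟩
      rw [hc, ← map_pow, Real.sq_sqrt hc0]
      ring
    · -- complex root
      have hmapdeg : 0 < (q.map (algebraMap ℝ ℂ)).degree := by
        rw [Polynomial.degree_map]
        exact Polynomial.natDegree_pos_iff_degree_pos.mp (Nat.pos_of_ne_zero hd0)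
      obtain ⟨z, hz⟩ := Complex.exists_root hmapdeg
      by_cases him : z.im = 0
      · -- real root case
        set r := z.re with hr_def
        have hzr : z = (r : ℂ) := Complex.ext rfl (by simpa using him)
        have hr : q.eval r = 0 := by
          have : (q.map (algebraMap ℝ ℂ)).eval ((algebraMap ℝ ℂ) r) = 0 := by
            rw [← hz.eq_zero]; congr 1; exact (hzr ▸ rfl)
          rw [Polynomial.eval_map, Polynomial.eval₂_at_apply] at this
          have h5 : ((q.eval r : ℝ) : ℂ) = 0 := by rwa [← Complex.coe_algebraMap]
          exact_mod_cast h5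
        have hmin : IsLocalMin (fun x => q.eval x) r :=
          Filter.Eventually.of_forall fun y => by simpa [hr] using hpos y
        have hder : q.derivative.eval r = 0 := by
          have := hmin.deriv_eq_zero
          rwa [Polynomial.deriv] at this
        obtain ⟨h1, hfac⟩ := (Polynomial.dvd_iff_isRoot.mpr hr)
        have h1r : h1.eval r = 0 := by
          have hd : q.derivative = h1 + (X - Polynomial.C r) * h1.derivative := by
            rw [hfac, Polynomial.derivative_mul, Polynomial.derivative_X_sub_C]
            ring
          have := hder
          rw [hd] at this
          simpa using this
        obtain ⟨h2, hfac2⟩ := (Polynomial.dvd_iff_isRoot.mpr h1r)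
        have hq2 : q = (X - Polynomial.C r)^2 * h2 := by rw [hfac, hfac2]; ring
        have hh2ne : h2 ≠ 0 := by
          intro h; rw [h, mul_zero] at hq2; exact hq0 hq2
        have hndeg : q.natDegree = 2 + h2.natDegree := by
          rw [hq2, Polynomial.natDegree_mul (pow_ne_zero 2 (Polynomial.X_sub_C_ne_zero r)) hh2ne]
          congr 1
          rw [Polynomial.natDegree_pow, Polynomial.natDegree_X_sub_C]
        have hh2pos : ∀ x : ℝ, 0 ≤ h2.eval x := by
          have hne : ∀ x : ℝ, x ≠ r → 0 ≤ h2.eval x := by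
            intro x hx
            have h3 : (0:ℝ) < (x - r)^2 := by
              have : x - r ≠ 0 := sub_ne_zero.mpr hx
              positivity
            have h4 := hpos x
            rw [hq2] at h4
            simp only [Polynomial.eval_mul, Polynomial.eval_pow, Polynomial.eval_sub,
              Polynomial.eval_X, Polynomial.eval_C] at h4
            nlinarith
          intro x
          rcases eq_or_ne x r with hx | hx
          · have htend : Filter.Tendsto (fun y => h2.eval y)
                (nhdsWithin r (({r} : Set ℝ)ᶜ)) (nhds (h2.eval r)) :=
              (h2.continuousAt).continuousWithinAt
            rw [hx]
            refine ge_of_tendsto htend ?_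
            filter_upwards [self_mem_nhdsWithin] with y hy
            exact hne y hy
          · exact hne x hx
        obtain ⟨a, b, hab, ha, hb⟩ := ih h2 (by omega) hh2pos
        refine ⟨(X - Polynomial.C r) * a, (X - Polynomial.C r) * b, ?_, ?_, ?_⟩
        · rw [hq2, hab]; ring
        · exact le_trans (Polynomial.natDegree_mul_le) (by rw [Polynomial.natDegree_X_sub_C]; omega)
        · exact le_trans (Polynomial.natDegree_mul_le) (by rw [Polynomial.natDegree_X_sub_C]; omega)
      · -- nonreal root case
        set a0 := z.re
        set b0 := z.im
        set d : Polynomial ℝ := X^2 + Polynomial.C (-(2*a0)) * X + Polynomial.C (a0^2 + b0^2) with hd_def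
        have hdmap : d.map (algebraMap ℝ ℂ)
            = (X - Polynomial.C z) * (X - Polynomial.C ((starRingEnd ℂ) z)) := by
          have h1 : ((-(2*a0) : ℝ) : ℂ) = -(z + (starRingEnd ℂ) z) := by
            rw [Complex.add_conj]; push_cast; ring
          have h2 : ((a0^2 + b0^2 : ℝ) : ℂ) = z * (starRingEnd ℂ) z := by
            rw [Complex.mul_conj, Complex.normSq_apply]; push_cast; ring
          simp only [hd_def, Polynomial.map_add, Polynomial.map_mul, Polynomial.map_pow,
            Polynomial.map_X, Polynomial.map_C]
          rw [show (algebraMap ℝ ℂ) (-(2*a0)) = -(z + (starRingEnd ℂ) z) from h1,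
            show (algebraMap ℝ ℂ) (a0^2 + b0^2) = z * (starRingEnd ℂ) z from h2]
          rw [map_neg, map_add, map_mul]
          ring
        have hdvd1 : (X - Polynomial.C z) ∣ q.map (algebraMap ℝ ℂ) :=
          Polynomial.dvd_iff_isRoot.mpr hz
        have hconj : (q.map (algebraMap ℝ ℂ)).IsRoot ((starRingEnd ℂ) z) := by
          have h0 : Polynomial.eval₂ (algebraMap ℝ ℂ) z q = 0 := by
            rwa [← Polynomial.eval_map]
          have h1 := congrArg (starRingEnd ℂ) h0
          rw [Polynomial.hom_eval₂, map_zero] at h1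
          have h2 : (starRingEnd ℂ).comp ((algebraMap ℝ ℂ) : ℝ →+* ℂ) = algebraMap ℝ ℂ := by
            ext x
            simp [Complex.conj_ofReal]
          rw [h2] at h1
          rwa [Polynomial.IsRoot, Polynomial.eval_map]
        have hdvd2 : (X - Polynomial.C ((starRingEnd ℂ) z)) ∣ q.map (algebraMap ℝ ℂ) :=
          Polynomial.dvd_iff_isRoot.mpr hconj
        have hne : z ≠ (starRingEnd ℂ) z := by
          intro h
          exact him (Complex.conj_eq_iff_im.mp h.symm)
        have hcop : IsCoprime (X - Polynomial.C z) (X - Polynomial.C ((starRingEnd ℂ) z)) :=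
          Polynomial.isCoprime_X_sub_C_of_isUnit_sub (by
            rw [isUnit_iff_ne_zero, sub_ne_zero]; exact hne)
        have hdvdC : d.map (algebraMap ℝ ℂ) ∣ q.map (algebraMap ℝ ℂ) := by
          rw [hdmap]; exact hcop.mul_dvd hdvd1 hdvd2
        have hdvd : d ∣ q := (Polynomial.map_dvd_map' (algebraMap ℝ ℂ)).mp hdvdC
        obtain ⟨q', hfac⟩ := hdvd
        have hb0 : b0 ≠ 0 := him
        have hdeval : ∀ x : ℝ, 0 < d.eval x := by
          intro x
          simp only [hd_def, Polynomial.eval_add, Polynomial.eval_mul, Polynomial.eval_pow,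
            Polynomial.eval_X, Polynomial.eval_C]
          have hb2 : 0 < b0^2 := by positivity
          nlinarith [sq_nonneg (x - a0)]
        have hq'pos : ∀ x : ℝ, 0 ≤ q'.eval x := by
          intro x
          have h4 := hpos x
          rw [hfac, Polynomial.eval_mul] at h4
          nlinarith [hdeval x]
        have hq'ne : q' ≠ 0 := by
          intro h; rw [h, mul_zero] at hfac; exact hq0 hfac
        have hddeg : d.degree = 2 := by
          have h1 : (Polynomial.C (-(2*a0)) * X + Polynomial.C (a0^2+b0^2) : Polynomial ℝ).degree ≤ 1 :=
            Polynomial.degree_linear_le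
          have h2 : d = X^2 + (Polynomial.C (-(2*a0)) * X + Polynomial.C (a0^2+b0^2)) := by
            rw [hd_def]; ring
          rw [h2, Polynomial.degree_add_eq_left_of_degree_lt (by
            rw [Polynomial.degree_X_pow]
            exact lt_of_le_of_lt h1 (by norm_num)), Polynomial.degree_X_pow]
          norm_cast
        have hdne : d ≠ 0 := fun h => by simp [h] at hddeg
        have hdnat : d.natDegree = 2 := Polynomial.natDegree_eq_of_degree_eq_some hddeg
        have hndeg : q.natDegree = 2 + q'.natDegree := by
          rw [hfac, Polynomial.natDegree_mul hdne hq'ne, hdnat]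
        obtain ⟨a, b, hab, ha, hb⟩ := ih q' (by omega) hq'pos
        have hd_sos : d = (X - Polynomial.C a0)^2 + (Polynomial.C b0)^2 := by
          rw [hd_def]
          rw [show Polynomial.C (-(2*a0)) = -(2 * Polynomial.C a0) by rw [map_neg, map_mul, map_ofNat],
            show Polynomial.C (a0^2 + b0^2) = (Polynomial.C a0)^2 + (Polynomial.C b0)^2 by
              rw [map_add, map_pow, map_pow]]
          ring
        refine ⟨(X - Polynomial.C a0) * a - Polynomial.C b0 * b,
               (X - Polynomial.C a0) * b + Polynomial.C b0 * a, ?_, ?_, ?_⟩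
        · rw [hfac, hab, hd_sos]; ring
        · refine le_trans (Polynomial.natDegree_sub_le _ _) ?_
          rw [max_le_iff]
          constructor
          · exact le_trans (Polynomial.natDegree_mul_le)
              (by rw [Polynomial.natDegree_X_sub_C]; omega)
          · exact le_trans (Polynomial.natDegree_mul_le)
              (by rw [Polynomial.natDegree_C]; omega)
        · refine le_trans (Polynomial.natDegree_add_le _ _) ?_
          rw [max_le_iff]
          constructor
          · exact le_trans (Polynomial.natDegree_mul_le)
              (by rw [Polynomial.natDegree_X_sub_C]; omega)
          · exact le_trans (Polynomial.natDegree_mul_le)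
              (by rw [Polynomial.natDegree_C]; omega)

private lemma even_sum_reindex (M : ℕ) (f : ℕ → ℝ) (hf : ∀ n, n % 2 = 1 → f n = 0) :
    ∑ n ∈ range (2*M+1), f n = ∑ l ∈ range (M+1), f (2*l) := by
  have himg : ∑ l ∈ range (M+1), f (2*l) = ∑ n ∈ (range (M+1)).image (fun l => 2*l), f n := by
    rw [Finset.sum_image (by intro a _ b _ h; simp only at h; omega)]
  rw [himg]
  refine (Finset.sum_subset ?_ ?_).symm
  · intro n hn
    rw [Finset.mem_image] at hn
    obtain ⟨l, hl, rfl⟩ := hn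
    rw [Finset.mem_range] at hl ⊢
    omega
  · intro n hn hnot
    rw [Finset.mem_image] at hnot
    push_neg at hnot
    refine hf n ?_
    by_contra hodd
    have heven : n % 2 = 0 := by omega
    rw [Finset.mem_range] at hn
    exact hnot (n/2) (Finset.mem_range.mpr (by omega)) (by omega)

private lemma lag_inv (m l : ℕ) (hl : l ≤ m) (x : ℝ) :
    (l.factorial : ℝ) * ∑ k ∈ range (m+1), (l.choose k : ℝ) * laguerreFun k x
      = x ^ l * Real.exp (-x/2) := by
  have hstep : ∑ k ∈ range (m+1), (l.choose k : ℝ) * laguerreFun k x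
      = ∑ k ∈ range (m+1), ∑ j ∈ range (m+1),
          (-1:ℝ)^k * (l.choose k : ℝ) * ((-1:ℝ)^j / (j.factorial : ℝ) * (k.choose j : ℝ))
            * (x^j * Real.exp (-x/2)) := by
    refine Finset.sum_congr rfl fun k hk => ?_
    rw [Finset.mem_range] at hk
    rw [laguerreFun, laguerreL]
    have hext : ∑ j ∈ range (k+1), (-1:ℝ)^j / (j.factorial:ℝ) * (k.choose j : ℝ) * x^j
        = ∑ j ∈ range (m+1), (-1:ℝ)^j / (j.factorial:ℝ) * (k.choose j : ℝ) * x^j := by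
      refine Finset.sum_subset (Finset.range_subset_range.mpr (by omega)) ?_
      intro j _ hj
      rw [Finset.mem_range, not_lt] at hj
      rw [Nat.choose_eq_zero_of_lt (show k < j by omega)]
      ring
    rw [hext, Finset.mul_sum, Finset.sum_mul, Finset.mul_sum]
    refine Finset.sum_congr rfl fun j hj => ?_
    ring
  rw [hstep, Finset.sum_comm]
  have hj : ∀ j ∈ range (m+1), ∑ k ∈ range (m+1),
      (-1:ℝ)^k * (l.choose k : ℝ) * ((-1:ℝ)^j / (j.factorial : ℝ) * (k.choose j : ℝ))
        * (x^j * Real.exp (-x/2))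
      = ((-1:ℝ)^j / (j.factorial:ℝ)) * (x^j * Real.exp (-x/2))
          * ((-1:ℝ)^l * (if j = l then 1 else 0)) := by
    intro j _
    rw [← orth (m+1) l j (by omega), Finset.mul_sum]
    refine Finset.sum_congr rfl fun k _ => ?_
    ring
  rw [Finset.sum_congr rfl hj, Finset.sum_eq_single l]
  · rw [if_pos rfl]
    have hfl : (l.factorial : ℝ) ≠ 0 := by positivity
    have h2 : (-1:ℝ)^l * (-1:ℝ)^l = 1 := by
      rw [← pow_add]
      exact Even.neg_one_pow ⟨l, by omega⟩
    field_simp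
    linear_combination x ^ l * h2
  · intro n _ hn
    rw [if_neg hn]
    ring
  · intro hl'
    exact absurd (Finset.mem_range.mpr (by omega)) hl'

private lemma inv_sum (m k : ℕ) (hk : k ≤ m) (s : ℕ → ℝ) :
    ∑ l ∈ range (k+1), (-1:ℝ)^(k+l) / (l.factorial:ℝ) * (k.choose l : ℝ) *
      (∑ j ∈ range (l+1), s j * (l.choose j : ℝ) * (l.factorial : ℝ))
    = s k := by
  have hterm : ∀ l ∈ range (k+1), (-1:ℝ)^(k+l) / (l.factorial:ℝ) * (k.choose l : ℝ) *
      (∑ j ∈ range (l+1), s j * (l.choose j : ℝ) * (l.factorial : ℝ))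
      = ∑ j ∈ range (m+1), s j * ((-1:ℝ)^(k+l) * (k.choose l : ℝ) * (l.choose j : ℝ)) := by
    intro l hl
    rw [Finset.mem_range] at hl
    have hext : ∑ j ∈ range (l+1), s j * (l.choose j : ℝ) * (l.factorial : ℝ)
        = ∑ j ∈ range (m+1), s j * (l.choose j : ℝ) * (l.factorial : ℝ) := by
      refine Finset.sum_subset (Finset.range_subset_range.mpr (by omega)) ?_
      intro j _ hj
      rw [Finset.mem_range, not_lt] at hj
      rw [Nat.choose_eq_zero_of_lt (show l < j by omega)]
      ring
    rw [hext, Finset.mul_sum]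
    refine Finset.sum_congr rfl fun j _ => ?_
    have hfl : (l.factorial : ℝ) ≠ 0 := by positivity
    field_simp
  rw [Finset.sum_congr rfl hterm, Finset.sum_comm]
  have hj : ∀ j ∈ range (m+1),
      ∑ l ∈ range (k+1), s j * ((-1:ℝ)^(k+l) * (k.choose l : ℝ) * (l.choose j : ℝ))
      = s j * ((-1:ℝ)^k * ((-1:ℝ)^k * (if j = k then 1 else 0))) := by
    intro j _
    rw [← orth (k+1) k j (by omega)]
    rw [Finset.mul_sum _ _ ((-1:ℝ)^k), Finset.mul_sum _ _ (s j)]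
    refine Finset.sum_congr rfl fun l _ => ?_
    rw [pow_add]
    ring
  rw [Finset.sum_congr rfl hj, Finset.sum_eq_single k]
  · rw [if_pos rfl]
    have h2 : (-1:ℝ)^k * (-1:ℝ)^k = 1 := by
      rw [← pow_add]
      exact Even.neg_one_pow ⟨k, by omega⟩
    linear_combination s k * h2
  · intro n _ hn
    rw [if_neg hn]
    ring
  · intro hk'
    exact absurd (Finset.mem_range.mpr (by omega)) hk'

end auxlemmas

/-- the sequence `s` pairs nonnegatively with every truncated Laguerre series
(up to degree `m`) that is nonnegative on `[0, ∞)` iff the associated Laguerre moment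
matrix `A` is positive semidefinite. -/
theorem laguerre_pairing_nonneg_iff_moment_matrix_psd (m : ℕ) (s : ℕ → ℝ)
    (A : Matrix (Fin (m + 1)) (Fin (m + 1)) ℝ)
    (hA : ∀ i j : Fin (m + 1), A i j =
      if (i.val + j.val) % 2 = 0 then
        ∑ k ∈ Finset.range ((i.val + j.val) / 2 + 1),
          s k * (((i.val + j.val) / 2).choose k : ℝ) * (((i.val + j.val) / 2).factorial : ℝ)
      else 0) :
    (∀ g : ℕ → ℝ,
        (∀ x : ℝ, 0 ≤ x → 0 ≤ ∑ k ∈ Finset.range (m + 1), g k * laguerreFun k x) →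
        0 ≤ ∑ k ∈ Finset.range (m + 1), s k * g k) ↔ A.PosSemidef := by
  classical
  open Polynomial Finset in
  set t : ℕ → ℝ := fun n => if n % 2 = 0 then
      ∑ k ∈ Finset.range (n / 2 + 1), s k * ((n / 2).choose k : ℝ) * ((n / 2).factorial : ℝ)
    else 0 with ht_def
  have hAt : ∀ i j : Fin (m+1), A i j = t (i.val + j.val) := fun i j => hA i j
  have ht2 : ∀ l : ℕ, t (2*l) = ∑ k ∈ Finset.range (l+1),
      s k * (l.choose k : ℝ) * (l.factorial : ℝ) := by
    intro l
    have h1 : (2*l) % 2 = 0 := by omega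
    have h2 : (2*l) / 2 = l := by omega
    simp only [ht_def, h1, h2, if_pos]
  have hodd : ∀ n, n % 2 = 1 → t n = 0 := by
    intro n hn
    simp only [ht_def]
    rw [if_neg (by omega)]
  -- the quadratic-form bridge
  have hquad : ∀ D : Polynomial ℝ, D.natDegree ≤ m →
      lamF t (2*m+1) (D^2) = dotProduct (star (fun i : Fin (m+1) => D.coeff i.val))
        (A.mulVec (fun i : Fin (m+1) => D.coeff i.val)) := by
    intro D hD
    rw [lam_sq t m D hD]
    simp only [dotProduct, Matrix.mulVec, Pi.star_apply, star_trivial, hAt]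
    rw [← Fin.sum_univ_eq_sum_range
      (fun i => ∑ j ∈ Finset.range (m+1), D.coeff i * D.coeff j * t (i+j)) (m+1)]
    refine Finset.sum_congr rfl fun i _ => ?_
    rw [← Fin.sum_univ_eq_sum_range
      (fun j => D.coeff i.val * D.coeff j * t (i.val+j)) (m+1), Finset.mul_sum]
    refine Finset.sum_congr rfl fun j _ => ?_
    ring
  constructor
  · -- pairing ⟹ PSD
    intro h
    rw [Matrix.posSemidef_iff_dotProduct_mulVec]
    constructor
    · -- Hermitian
      ext i j
      simp only [Matrix.conjTranspose_apply, star_trivial, hAt]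
      rw [Nat.add_comm]
    · intro y
      set c : ℕ → ℝ := fun i => if h : i < m + 1 then y ⟨i, h⟩ else 0 with hc_def
      set Cp : Polynomial ℝ := ∑ i ∈ Finset.range (m+1), Polynomial.monomial i (c i)
        with hCp_def
      have hCpdeg : Cp.natDegree ≤ m := by
        refine Polynomial.natDegree_sum_le_of_forall_le _ _ fun i hi => ?_
        rw [Finset.mem_range] at hi
        exact le_trans (Polynomial.natDegree_monomial_le _) (by omega)
      have hCpcoeff : ∀ n, Cp.coeff n = c n := by
        intro n
        rw [hCp_def, Polynomial.finset_sum_coeff]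
        simp only [Polynomial.coeff_monomial]
        rw [Finset.sum_ite_eq' (Finset.range (m+1)) n c]
        by_cases hn : n ∈ Finset.range (m+1)
        · rw [if_pos hn]
        · rw [if_neg hn]
          rw [Finset.mem_range] at hn
          show 0 = if h : n < m + 1 then y ⟨n, h⟩ else 0
          rw [dif_neg (by omega)]
      set q : Polynomial ℝ := Cp^2 with hq_def
      have hqdeg : q.natDegree ≤ 2*m := by
        rw [hq_def, Polynomial.natDegree_pow]
        omega
      set g : ℕ → ℝ := fun k => ∑ l ∈ Finset.range (m+1),
        q.coeff (2*l) * (l.factorial:ℝ) * (l.choose k : ℝ) with hg_def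
      have key : ∀ u : ℝ, ∑ l ∈ Finset.range (m+1), q.coeff (2*l) * (u^2)^l
          = (q.eval u + q.eval (-u)) / 2 := by
        intro u
        have h1 := even_sum_reindex m (fun n => q.coeff n * u^n * (1 + (-1:ℝ)^n) / 2)
            (fun n hn => by
              show q.coeff n * u ^ n * (1 + (-1:ℝ) ^ n) / 2 = 0
              rw [show ((-1:ℝ))^n = -1 from Odd.neg_one_pow ⟨n/2, by omega⟩]; ring)
        calc ∑ l ∈ Finset.range (m+1), q.coeff (2*l) * (u^2)^l
            = ∑ l ∈ Finset.range (m+1), q.coeff (2*l) * u^(2*l) * (1 + (-1:ℝ)^(2*l)) / 2 := by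
              refine Finset.sum_congr rfl fun l _ => ?_
              rw [← pow_mul, show ((-1:ℝ))^(2*l) = 1 from by
                rw [pow_mul]; norm_num]
              ring
          _ = ∑ n ∈ Finset.range (2*m+1), q.coeff n * u^n * (1 + (-1:ℝ)^n) / 2 := h1.symm
          _ = (q.eval u + q.eval (-u)) / 2 := by
              rw [Polynomial.eval_eq_sum_range' (lt_of_le_of_lt hqdeg (lt_add_one _)) u,
                  Polynomial.eval_eq_sum_range' (lt_of_le_of_lt hqdeg (lt_add_one _)) (-u)]
              rw [← Finset.sum_add_distrib, ← Finset.sum_div]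
              refine congrArg (· / 2) (Finset.sum_congr rfl fun n _ => ?_)
              rw [neg_pow]
              ring
      have hg1 : ∀ x : ℝ, 0 ≤ x → 0 ≤ ∑ k ∈ Finset.range (m + 1), g k * laguerreFun k x := by
        intro x hx
        have hsum : ∑ k ∈ Finset.range (m+1), g k * laguerreFun k x
            = ∑ l ∈ Finset.range (m+1), q.coeff (2*l) * (x^l * Real.exp (-x/2)) := by
          simp only [hg_def, Finset.sum_mul]
          rw [Finset.sum_comm]
          refine Finset.sum_congr rfl fun l hl => ?_
          rw [Finset.mem_range] at hl
          rw [← lag_inv m l (by omega) x]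
          rw [Finset.mul_sum _ _ ((l.factorial : ℝ)), Finset.mul_sum _ _ (q.coeff (2*l))]
          refine Finset.sum_congr rfl fun k _ => ?_
          ring
        rw [hsum]
        have hfac : ∑ l ∈ Finset.range (m+1), q.coeff (2*l) * (x^l * Real.exp (-x/2))
            = (∑ l ∈ Finset.range (m+1), q.coeff (2*l) * x^l) * Real.exp (-x/2) := by
          rw [Finset.sum_mul]
          refine Finset.sum_congr rfl fun l _ => ?_
          ring
        rw [hfac]
        refine mul_nonneg ?_ (Real.exp_nonneg _)
        have hx2 : ((Real.sqrt x)^2) = x := Real.sq_sqrt hx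
        have h3 : ∑ l ∈ Finset.range (m+1), q.coeff (2*l) * x^l
            = (q.eval (Real.sqrt x) + q.eval (-Real.sqrt x)) / 2 := by
          rw [← key (Real.sqrt x)]
          refine Finset.sum_congr rfl fun l _ => ?_
          rw [hx2]
        rw [h3]
        have h4 : q.eval (Real.sqrt x) = (Cp.eval (Real.sqrt x))^2 := by
          rw [hq_def, Polynomial.eval_pow]
        have h5 : q.eval (-Real.sqrt x) = (Cp.eval (-Real.sqrt x))^2 := by
          rw [hq_def, Polynomial.eval_pow]
        rw [h4, h5]
        positivity
      have hg2 : ∑ k ∈ Finset.range (m + 1), s k * g k = lamF t (2*m+1) q := by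
        have hL : ∑ k ∈ Finset.range (m + 1), s k * g k
            = ∑ l ∈ Finset.range (m+1), q.coeff (2*l) * t (2*l) := by
          simp only [hg_def, Finset.mul_sum]
          rw [Finset.sum_comm]
          refine Finset.sum_congr rfl fun l hl => ?_
          rw [Finset.mem_range] at hl
          rw [ht2 l]
          have hext : ∑ k ∈ Finset.range (l+1), s k * (l.choose k : ℝ) * (l.factorial : ℝ)
              = ∑ k ∈ Finset.range (m+1), s k * (l.choose k : ℝ) * (l.factorial : ℝ) := by
            refine Finset.sum_subset (Finset.range_subset_range.mpr (by omega)) ?_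
            intro k _ hk
            rw [Finset.mem_range, not_lt] at hk
            rw [Nat.choose_eq_zero_of_lt (show l < k by omega)]
            ring
          rw [hext, Finset.mul_sum]
          refine Finset.sum_congr rfl fun k _ => ?_
          ring
        rw [hL, lamF]
        rw [even_sum_reindex m (fun n => q.coeff n * t n)
          (fun n hn => by show q.coeff n * t n = 0; rw [hodd n hn]; ring)]
      have hfin := h g hg1
      rw [hg2, hq_def, hquad Cp hCpdeg] at hfin
      have hvec : (fun i : Fin (m+1) => Cp.coeff i.val) = y := by
        funext i
        rw [hCpcoeff]
        show (if h : (i : ℕ) < m + 1 then y ⟨(i : ℕ), h⟩ else 0) = y i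
        rw [dif_pos i.isLt, Fin.eta]
      rwa [hvec] at hfin
  · -- PSD ⟹ pairing
    intro hPSD g hg
    set P : Polynomial ℝ := ∑ k ∈ Finset.range (m+1), ∑ l ∈ Finset.range (k+1),
        Polynomial.monomial l (g k * ((-1:ℝ)^(k+l) / (l.factorial:ℝ) * (k.choose l : ℝ)))
        with hP_def
    have hPdeg : P.natDegree ≤ m := by
      refine Polynomial.natDegree_sum_le_of_forall_le _ _ fun k hk => ?_
      rw [Finset.mem_range] at hk
      refine Polynomial.natDegree_sum_le_of_forall_le _ _ fun l hl => ?_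
      rw [Finset.mem_range] at hl
      exact le_trans (Polynomial.natDegree_monomial_le _) (by omega)
    have hPeval : ∀ x : ℝ, P.eval x * Real.exp (-x/2)
        = ∑ k ∈ Finset.range (m + 1), g k * laguerreFun k x := by
      intro x
      rw [hP_def]
      simp only [Polynomial.eval_finset_sum, Polynomial.eval_monomial]
      rw [Finset.sum_mul]
      refine Finset.sum_congr rfl fun k _ => ?_
      rw [laguerreFun, laguerreL, Finset.sum_mul]
      rw [show ((-1:ℝ))^k * (∑ l ∈ Finset.range (k+1),
            (-1:ℝ)^l / (l.factorial:ℝ) * (k.choose l:ℝ) * x^l) * Real.exp (-x/2)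
          = ∑ l ∈ Finset.range (k+1),
            (-1:ℝ)^k * ((-1:ℝ)^l / (l.factorial:ℝ) * (k.choose l:ℝ) * x^l) * Real.exp (-x/2)
          from by rw [Finset.mul_sum, Finset.sum_mul]]
      rw [Finset.mul_sum]
      refine Finset.sum_congr rfl fun l _ => ?_
      rw [pow_add]
      ring
    have hPpos : ∀ x : ℝ, 0 ≤ x → 0 ≤ P.eval x := by
      intro x hx
      have h1 := hg x hx
      rw [← hPeval x] at h1
      have hE := Real.exp_pos (-x/2)
      nlinarith
    set Q : Polynomial ℝ := P.comp (Polynomial.X^2) with hQ_def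
    have hQdeg : Q.natDegree ≤ 2*m := by
      refine le_trans (Polynomial.natDegree_comp_le) ?_
      rw [Polynomial.natDegree_X_pow]
      omega
    have hQpos : ∀ u : ℝ, 0 ≤ Q.eval u := by
      intro u
      rw [hQ_def, Polynomial.eval_comp, Polynomial.eval_pow, Polynomial.eval_X]
      exact hPpos _ (sq_nonneg u)
    obtain ⟨a, b, hab, hadeg, hbdeg⟩ := sos_of_nonneg m Q hQdeg hQpos
    have hnn : ∀ D : Polynomial ℝ, D.natDegree ≤ m → 0 ≤ lamF t (2*m+1) (D^2) := by
      intro D hD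
      rw [hquad D hD]
      exact hPSD.dotProduct_mulVec_nonneg _
    have hQnn : 0 ≤ lamF t (2*m+1) Q := by
      rw [hab, lamF_add]
      exact add_nonneg (hnn a hadeg) (hnn b hbdeg)
    have hsc : ∀ (F : Finset ℕ) (f : ℕ → Polynomial ℝ),
        (∑ i ∈ F, f i).comp (Polynomial.X^2) = ∑ i ∈ F, (f i).comp (Polynomial.X^2) := by
      intro F f
      simp [Polynomial.comp, Polynomial.eval₂_finset_sum]
    have hQlam : lamF t (2*m+1) Q = ∑ k ∈ Finset.range (m + 1), s k * g k := by
      rw [hQ_def, hP_def, hsc, lamF_sum]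
      refine Finset.sum_congr rfl fun k hk => ?_
      rw [Finset.mem_range] at hk
      rw [hsc, lamF_sum]
      have hterm : ∀ l ∈ Finset.range (k+1),
          lamF t (2*m+1) ((Polynomial.monomial l
            (g k * ((-1:ℝ)^(k+l) / (l.factorial:ℝ) * (k.choose l : ℝ)))).comp (Polynomial.X^2))
          = g k * ((-1:ℝ)^(k+l) / (l.factorial:ℝ) * (k.choose l : ℝ)) * t (2*l) := by
        intro l hl
        rw [Finset.mem_range] at hl
        rw [Polynomial.monomial_comp, ← pow_mul, Polynomial.C_mul_X_pow_eq_monomial]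
        exact lamF_monomial _ _ _ _ (by omega)
      rw [Finset.sum_congr rfl hterm]
      have hinv := inv_sum m k (by omega) s
      calc ∑ l ∈ Finset.range (k+1),
              g k * ((-1:ℝ)^(k+l) / (l.factorial:ℝ) * (k.choose l : ℝ)) * t (2*l)
          = g k * ∑ l ∈ Finset.range (k+1), (-1:ℝ)^(k+l) / (l.factorial:ℝ) * (k.choose l : ℝ) *
              (∑ j ∈ Finset.range (l+1), s j * (l.choose j : ℝ) * (l.factorial : ℝ)) := by
            rw [Finset.mul_sum]
            refine Finset.sum_congr rfl fun l _ => ?_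
            rw [ht2 l]
            ring
        _ = g k * s k := by rw [hinv]
        _ = s k * g k := by ring
    rw [← hQlam]
    exact hQnn
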